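/- Suppose a sequence of nonnegative numbers satisfies: for all p ≥ 1, A((p+1)β²)^{1/β²} ≤ C p² A((p+1)β)^{1/β}, where β > 1, A(q) := (∫_{𝕋^N} θ^q dx) for a fixed nonnegative measurable θ with A(q₀) < ∞ for some q₀ ≥ 2β. Then θ ∈ L^∞(𝕋^N) and ‖θ‖_{L^∞} is bounded by a constant depending only on C, β, and A(q₀). -/

import Mathlib

open MeasureTheory Filter

/-- The sequence of logarithmic bounds in the Moser iteration. -/
noncomputable def aSeq (C β q₀ K : ℝ) : ℕ → ℝ
  | 0 => Real.log (max K 1)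
  | n + 1 => β * aSeq C β q₀ K n + β ^ 2 * Real.log (C * (q₀ * β ^ n / β - 1) ^ 2)

/-- Positive part of the logarithm of the iteration constants. -/
noncomputable def mTerm (C β q₀ : ℝ) (k : ℕ) : ℝ :=
  max 0 (Real.log (C * (q₀ * β ^ k / β - 1) ^ 2))

theorem stmt_10 {X : Type*} [MeasureSpace X] [IsProbabilityMeasure (volume : Measure X)]
    (C β q₀ K : ℝ) (hC : 0 < C) (hβ : 1 < β) (hq₀ : 2 * β ≤ q₀) (hK : 0 ≤ K) :
    ∃ M : ℝ, ∀ θ : X → ℝ, Measurable θ → (∀ x, 0 ≤ θ x) →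
      (∫⁻ x, ENNReal.ofReal (θ x ^ q₀)) ≤ ENNReal.ofReal K →
      (∀ p : ℝ, 1 ≤ p →
        (∫⁻ x, ENNReal.ofReal (θ x ^ ((p + 1) * β ^ 2))) ^ (1 / β ^ 2)
          ≤ ENNReal.ofReal (C * p ^ 2)
              * (∫⁻ x, ENNReal.ofReal (θ x ^ ((p + 1) * β))) ^ (1 / β)) →
      ∀ᵐ x, θ x ≤ M := by
  have hβ0 : (0:ℝ) < β := lt_trans one_pos hβ
  have hβne : β ≠ 0 := hβ0.ne'
  have hq₀2 : (2:ℝ) ≤ q₀ := le_trans (by nlinarith) hq₀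
  have hq₀0 : (0:ℝ) < q₀ := by linarith
  have hβpow : ∀ n : ℕ, (1:ℝ) ≤ β ^ n := fun n => one_le_pow₀ hβ.le
  have hp1 : ∀ n : ℕ, 1 ≤ q₀ * β ^ n / β - 1 := by
    intro n
    have h1 := hβpow n
    rw [le_sub_iff_add_le, le_div_iff₀ hβ0]
    nlinarith
  have hppos : ∀ n : ℕ, 0 < q₀ * β ^ n / β - 1 := fun n => lt_of_lt_of_le one_pos (hp1 n)
  have hpq : ∀ n : ℕ, q₀ * β ^ n / β - 1 ≤ q₀ * β ^ n := by
    intro n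
    have h1 := hβpow n
    have h2 : q₀ * β ^ n / β ≤ q₀ * β ^ n := by
      rw [div_le_iff₀ hβ0]
      nlinarith [mul_pos hq₀0 (lt_of_lt_of_le one_pos h1)]
    linarith
  have hcpos : ∀ n : ℕ, 0 < C * (q₀ * β ^ n / β - 1) ^ 2 := by
    intro n
    have := hppos n
    positivity
  -- bound on mTerm
  set A : ℝ := |Real.log C| + 2 * |Real.log q₀| with hA
  set B : ℝ := 2 * Real.log β with hB
  have hA0 : 0 ≤ A := by positivity
  have hB0 : 0 ≤ B := by
    have := (Real.log_pos hβ).le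
    positivity
  have hm_nonneg : ∀ k, 0 ≤ mTerm C β q₀ k := fun k => le_max_left _ _
  have hm_le : ∀ k : ℕ, mTerm C β q₀ k ≤ A + B * k := by
    intro k
    have hpk := hppos k
    have hlog : Real.log (C * (q₀ * β ^ k / β - 1) ^ 2)
        = Real.log C + 2 * Real.log (q₀ * β ^ k / β - 1) := by
      rw [Real.log_mul hC.ne' (by positivity), Real.log_pow]
      push_cast
      ring
    have hlogp : Real.log (q₀ * β ^ k / β - 1) ≤ Real.log q₀ + k * Real.log β := by
      have := Real.log_le_log hpk (hpq k)
      rwa [Real.log_mul hq₀0.ne' (by positivity), Real.log_pow] at this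
    have h1 : Real.log (C * (q₀ * β ^ k / β - 1) ^ 2) ≤ A + B * k := by
      rw [hlog, hA, hB]
      have h2 : Real.log C ≤ |Real.log C| := le_abs_self _
      have h3 : Real.log q₀ ≤ |Real.log q₀| := le_abs_self _
      nlinarith
    exact max_le (by positivity) h1
  -- summability
  have hrβ : β⁻¹ < 1 := inv_lt_one_of_one_lt₀ hβ
  have hrβ0 : (0:ℝ) ≤ β⁻¹ := by positivity
  have hsum : Summable (fun k : ℕ => (β⁻¹) ^ k * mTerm C β q₀ k) := by
    have hg : Summable (fun k : ℕ => A * (β⁻¹) ^ k + B * ((k : ℝ) * (β⁻¹) ^ k)) := by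
      refine Summable.add ((summable_geometric_of_lt_one hrβ0 hrβ).mul_left A) ?_
      have := summable_pow_mul_geometric_of_norm_lt_one (R := ℝ) 1
        (r := β⁻¹) (by rwa [Real.norm_eq_abs, abs_of_nonneg hrβ0])
      simpa [pow_one] using this.mul_left B
    refine Summable.of_nonneg_of_le (fun k => mul_nonneg (pow_nonneg hrβ0 k) (hm_nonneg k))
      (fun k => ?_) hg
    have := mul_le_mul_of_nonneg_left (hm_le k) (pow_nonneg hrβ0 k)
    calc (β⁻¹) ^ k * mTerm C β q₀ k ≤ (β⁻¹) ^ k * (A + B * k) := this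
      _ = A * (β⁻¹) ^ k + B * ((k : ℝ) * (β⁻¹) ^ k) := by ring
  set S : ℝ := ∑' k : ℕ, (β⁻¹) ^ k * mTerm C β q₀ k with hSdef
  have hS0 : 0 ≤ S := tsum_nonneg (fun k => mul_nonneg (pow_nonneg hrβ0 k) (hm_nonneg k))
  have ha0 : 0 ≤ aSeq C β q₀ K 0 := Real.log_nonneg (le_max_right _ _)
  set T : ℝ := aSeq C β q₀ K 0 + β * S with hTdef
  have hT0 : 0 ≤ T := by positivity
  -- a n ≤ β ^ n * T
  have haT : ∀ n : ℕ, aSeq C β q₀ K n ≤ β ^ n * T := by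
    have key : ∀ n : ℕ, aSeq C β q₀ K n
        ≤ β ^ n * (aSeq C β q₀ K 0 + β * ∑ k ∈ Finset.range n, (β⁻¹) ^ k * mTerm C β q₀ k) := by
      intro n
      induction n with
      | zero => simp
      | succ n ih =>
        have hlogm : Real.log (C * (q₀ * β ^ n / β - 1) ^ 2) ≤ mTerm C β q₀ n :=
          le_max_right _ _
        have step : aSeq C β q₀ K (n + 1)
            ≤ β * (β ^ n * (aSeq C β q₀ K 0
                + β * ∑ k ∈ Finset.range n, (β⁻¹) ^ k * mTerm C β q₀ k))
              + β ^ 2 * mTerm C β q₀ n := by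
          show β * aSeq C β q₀ K n + β ^ 2 * Real.log (C * (q₀ * β ^ n / β - 1) ^ 2) ≤ _
          have h1 := mul_le_mul_of_nonneg_left ih hβ0.le
          have h2 := mul_le_mul_of_nonneg_left hlogm (by positivity : (0:ℝ) ≤ β ^ 2)
          linarith
        refine step.trans (le_of_eq ?_)
        rw [Finset.sum_range_succ]
        have hβn : (β:ℝ) ^ n ≠ 0 := pow_ne_zero _ hβne
        field_simp
        have hinv : β ^ n * β⁻¹ ^ n = 1 := by rw [← mul_pow, mul_inv_cancel₀ hβne, one_pow]
        linear_combination (-(β ^ 2 * mTerm C β q₀ n)) * hinv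
    intro n
    refine (key n).trans ?_
    have hsumle : ∑ k ∈ Finset.range n, (β⁻¹) ^ k * mTerm C β q₀ k ≤ S :=
      Summable.sum_le_tsum _ (fun k _ => mul_nonneg (pow_nonneg hrβ0 k) (hm_nonneg k)) hsum
    have : aSeq C β q₀ K 0 + β * ∑ k ∈ Finset.range n, (β⁻¹) ^ k * mTerm C β q₀ k ≤ T := by
      rw [hTdef]
      nlinarith
    have hβnpos : (0:ℝ) < β ^ n := by positivity
    nlinarith
  refine ⟨Real.exp (T / q₀), ?_⟩
  intro θ hθ hθ0 hKbound hiter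
  set M : ℝ := Real.exp (T / q₀) with hMdef
  have hM0 : 0 < M := Real.exp_pos _
  -- main Moser iteration bound
  have hmain : ∀ n : ℕ, (∫⁻ x, ENNReal.ofReal (θ x ^ (q₀ * β ^ n)))
      ≤ ENNReal.ofReal (Real.exp (aSeq C β q₀ K n)) := by
    intro n
    induction n with
    | zero =>
      have h1 : (∫⁻ x, ENNReal.ofReal (θ x ^ (q₀ * β ^ 0))) = ∫⁻ x, ENNReal.ofReal (θ x ^ q₀) := by
        simp
      rw [h1]
      refine hKbound.trans (ENNReal.ofReal_le_ofReal ?_)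
      show K ≤ Real.exp (Real.log (max K 1))
      rw [Real.exp_log (by positivity)]
      exact le_max_left _ _
    | succ n ih =>
      set pn : ℝ := q₀ * β ^ n / β - 1 with hpn
      have hpn1 : 1 ≤ pn := hp1 n
      have hcp : 0 < C * pn ^ 2 := hcpos n
      have h3 := hiter pn hpn1
      have he1 : (pn + 1) * β = q₀ * β ^ n := by
        rw [hpn]; field_simp; ring
      have he2 : (pn + 1) * β ^ 2 = q₀ * β ^ (n + 1) := by
        rw [hpn]; field_simp; ring
      rw [he1, he2] at h3
      -- bound the RHS using ih
      have h4 : (∫⁻ x, ENNReal.ofReal (θ x ^ (q₀ * β ^ n))) ^ (1 / β)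
          ≤ ENNReal.ofReal (Real.exp (aSeq C β q₀ K n)) ^ (1 / β) :=
        ENNReal.rpow_le_rpow ih (by positivity)
      rw [ENNReal.ofReal_rpow_of_pos (Real.exp_pos _), ← Real.exp_mul] at h4
      have h5 : (∫⁻ x, ENNReal.ofReal (θ x ^ (q₀ * β ^ (n + 1)))) ^ (1 / β ^ 2)
          ≤ ENNReal.ofReal (C * pn ^ 2 * Real.exp (aSeq C β q₀ K n * (1 / β))) := by
        rw [ENNReal.ofReal_mul hcp.le]
        exact h3.trans (mul_le_mul_right h4 _)
      have h6 := ENNReal.rpow_le_rpow h5 (show (0:ℝ) ≤ β ^ 2 by positivity)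
      rw [← ENNReal.rpow_mul] at h6
      have he3 : 1 / β ^ 2 * β ^ 2 = 1 := by field_simp
      rw [he3, ENNReal.rpow_one,
        ENNReal.ofReal_rpow_of_pos (by positivity)] at h6
      refine h6.trans (ENNReal.ofReal_le_ofReal (le_of_eq ?_))
      have hb : C * pn ^ 2 * Real.exp (aSeq C β q₀ K n * (1 / β))
          = Real.exp (Real.log (C * pn ^ 2) + aSeq C β q₀ K n * (1 / β)) := by
        rw [Real.exp_add, Real.exp_log hcp]
      rw [hb, ← Real.exp_mul]
      congr 1
      show (Real.log (C * pn ^ 2) + aSeq C β q₀ K n * (1 / β)) * β ^ 2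
        = β * aSeq C β q₀ K n + β ^ 2 * Real.log (C * (q₀ * β ^ n / β - 1) ^ 2)
      rw [← hpn]
      field_simp
      ring
  -- convert to power bound with M
  have hMn : ∀ n : ℕ, (∫⁻ x, ENNReal.ofReal (θ x ^ (q₀ * β ^ n)))
      ≤ ENNReal.ofReal (M ^ (q₀ * β ^ n)) := by
    intro n
    refine (hmain n).trans (ENNReal.ofReal_le_ofReal ?_)
    rw [hMdef, ← Real.exp_mul]
    refine Real.exp_le_exp.2 ?_
    have h2 : T / q₀ * (q₀ * β ^ n) = β ^ n * T := by field_simp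
    rw [h2]
    exact haT n
  -- null sets above M
  have hnull : ∀ b : ℝ, M < b → volume {x | b ≤ θ x} = 0 := by
    intro b hb
    have hb0 : 0 < b := hM0.trans hb
    have key : ∀ n : ℕ, volume {x | b ≤ θ x} ≤ ENNReal.ofReal ((M / b) ^ (q₀ * β ^ n)) := by
      intro n
      have hqn : 0 < q₀ * β ^ n := by positivity
      have hεpos : 0 < b ^ (q₀ * β ^ n) := Real.rpow_pos_of_pos hb0 _
      have hmono : {x | b ≤ θ x} ⊆
          {x | ENNReal.ofReal (b ^ (q₀ * β ^ n)) ≤ ENNReal.ofReal (θ x ^ (q₀ * β ^ n))} := by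
        intro x hx
        exact ENNReal.ofReal_le_ofReal (Real.rpow_le_rpow hb0.le hx hqn.le)
      have hfmeas : AEMeasurable (fun x => ENNReal.ofReal (θ x ^ (q₀ * β ^ n))) volume :=
        (((Real.continuous_rpow_const hqn.le).measurable.comp hθ).ennreal_ofReal).aemeasurable
      have h2 := mul_meas_ge_le_lintegral₀ hfmeas (ENNReal.ofReal (b ^ (q₀ * β ^ n)))
      have h3 : ENNReal.ofReal (b ^ (q₀ * β ^ n)) * volume {x | b ≤ θ x}
          ≤ ENNReal.ofReal (M ^ (q₀ * β ^ n)) :=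
        le_trans (le_trans (mul_le_mul_right (measure_mono hmono) _) h2) (hMn n)
      have h4 : volume {x | b ≤ θ x}
          ≤ ENNReal.ofReal (M ^ (q₀ * β ^ n)) / ENNReal.ofReal (b ^ (q₀ * β ^ n)) := by
        rw [ENNReal.le_div_iff_mul_le
          (Or.inl (by simpa [ENNReal.ofReal_pos] using hεpos : ENNReal.ofReal (b ^ (q₀ * β ^ n)) ≠ 0))
          (Or.inl ENNReal.ofReal_ne_top)]
        rwa [mul_comm]
      rwa [← ENNReal.ofReal_div_of_pos hεpos, ← Real.div_rpow hM0.le hb0.le] at h4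
    have hr1 : M / b < 1 := (div_lt_one hb0).2 hb
    have hr0 : (0:ℝ) ≤ M / b := by positivity
    have hqtend : Tendsto (fun n : ℕ => q₀ * β ^ n) atTop atTop :=
      Tendsto.const_mul_atTop hq₀0 (tendsto_pow_atTop_atTop_of_one_lt hβ)
    have hrt : Tendsto (fun n : ℕ => (M / b) ^ (q₀ * β ^ n)) atTop (nhds 0) :=
      (tendsto_rpow_atTop_of_base_lt_one (M / b) (by linarith) hr1).comp hqtend
    have htend : Tendsto (fun n : ℕ => ENNReal.ofReal ((M / b) ^ (q₀ * β ^ n))) atTop (nhds 0) := by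
      have := (ENNReal.continuous_ofReal.tendsto 0).comp hrt
      rwa [ENNReal.ofReal_zero] at this
    have := ge_of_tendsto htend (Eventually.of_forall key)
    exact le_zero_iff.mp this
  -- conclude a.e. bound
  rw [ae_iff]
  refine measure_mono_null (fun x hx => ?_)
    (measure_iUnion_null (s := fun m : ℕ => {x | M + ((m : ℝ) + 1)⁻¹ ≤ θ x}) fun m =>
      hnull _ (lt_add_of_pos_right _ (by positivity)))
  simp only [Set.mem_setOf_eq, not_le] at hx
  obtain ⟨m, hm⟩ := exists_nat_one_div_lt (sub_pos.2 hx)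
  refine Set.mem_iUnion.2 ⟨m, ?_⟩
  have : ((m : ℝ) + 1)⁻¹ < θ x - M := by
    rwa [one_div] at hm
  show M + ((m : ℝ) + 1)⁻¹ ≤ θ x
  linarith
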